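/- Data processing inequality: let X be an ℝ^p-valued random vector, Z an ℝ^r-valued random vector, and Y = (Y_1,…,Y_q) an ℝ^q-valued random vector with non-degenerate components, all defined on a common probability space, and suppose Y and Z are conditionally independent given X. Then T(Y|Z) ≤ T(Y|X). In particular, T(Y|h(X)) ≤ T(Y|X) for every measurable function h : ℝ^p → ℝ^r. -/

import Mathlib

open MeasureTheory ProbabilityTheory

/-- Azadkia–Chatterjee's rank correlation `ξ(Y | m)` of a real random variable `Y`
given a sub-σ-algebra `m`. -/
noncomputable def xiSigma {Ω : Type*} (m : MeasurableSpace Ω) [MeasurableSpace Ω]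
    (P : Measure Ω) (Y : Ω → ℝ) : ℝ :=
  (∫ y, variance (P[Set.indicator {ω | y ≤ Y ω} (fun _ => (1 : ℝ)) | m]) P ∂(P.map Y)) /
  (∫ y, variance (Set.indicator {ω | y ≤ Y ω} (fun _ => (1 : ℝ))) P ∂(P.map Y))

/-- Azadkia–Chatterjee's rank correlation `ξ(Y | X)`: conditioning on the σ-algebra
generated by the random vector `X`. -/
noncomputable def xi {Ω α : Type*} [MeasurableSpace Ω] [MeasurableSpace α]
    (P : Measure Ω) (Y : Ω → ℝ) (X : Ω → α) : ℝ :=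
  xiSigma (MeasurableSpace.comap X inferInstance) P Y

/-- The σ-algebra generated by the response variables with index `< i`,
i.e. by `(Y_1, …, Y_{i-1})`; for `i = 0` it is the trivial σ-algebra `⊥`,
so that `xiSigma (sigmaPast Y 0) P (Y 0) = ξ(Y_1 | ∅) = 0`. -/
def sigmaPast {Ω : Type*} {q : ℕ} (Y : Fin q → Ω → ℝ) (i : Fin q) :
    MeasurableSpace Ω :=
  ⨆ j : Fin q, ⨆ _ : j < i, MeasurableSpace.comap (Y j) inferInstance

/-- The extension `T(Y | X)` of Azadkia–Chatterjee's rank correlation to a vector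
`Y = (Y_1, …, Y_q)` of response variables, given the predictor vector `X`:
`T(Y|X) = 1 − (q − ∑_i ξ(Y_i | (X,Y_{i−1},…,Y_1))) / (q − ∑_i ξ(Y_i | (Y_{i−1},…,Y_1)))`. -/
noncomputable def T {Ω α : Type*} [MeasurableSpace Ω] [MeasurableSpace α]
    (P : Measure Ω) {q : ℕ} (Y : Fin q → Ω → ℝ) (X : Ω → α) : ℝ :=
  1 - ((q : ℝ) - ∑ i, xiSigma (MeasurableSpace.comap X inferInstance ⊔ sigmaPast Y i) P (Y i)) /
      ((q : ℝ) - ∑ i, xiSigma (sigmaPast Y i) P (Y i))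

/-- A real random variable is non-degenerate if it is not almost surely constant. -/
def Nondegenerate {Ω : Type*} [MeasurableSpace Ω] (P : Measure Ω) (Y : Ω → ℝ) : Prop :=
  ¬ ∃ c : ℝ, ∀ᵐ ω ∂P, Y ω = c


set_option linter.unusedSectionVars false
set_option linter.unusedVariables false


section Aux
variable {Ω : Type*} {m' : MeasurableSpace Ω} {mΩ : MeasurableSpace Ω}
  {P : Measure Ω} [IsProbabilityMeasure P]

lemma integrable_of_bdd {f : Ω → ℝ} (hmeas : AEStronglyMeasurable f P)
    (hbdd : ∀ᵐ ω ∂P, |f ω| ≤ 1) : Integrable f P := by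
  refine Integrable.mono' (integrable_const (1 : ℝ)) hmeas ?_
  simpa [Real.norm_eq_abs] using hbdd

lemma memℒp2_of_bdd {f : Ω → ℝ} (hmeas : AEStronglyMeasurable f P)
    (hbdd : ∀ᵐ ω ∂P, |f ω| ≤ 1) : MemLp f 2 P :=
  MemLp.of_bound hmeas 1 (by simpa [Real.norm_eq_abs] using hbdd)

lemma sq_integrable_of_bdd {f : Ω → ℝ} (hmeas : AEStronglyMeasurable f P)
    (hbdd : ∀ᵐ ω ∂P, |f ω| ≤ 1) : Integrable (fun ω => (f ω)^2) P := by
  have he : (fun ω => (f ω)^2) = fun ω => f ω * f ω := by funext ω; ring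
  rw [he]
  refine integrable_of_bdd (hmeas.mul hmeas) ?_
  filter_upwards [hbdd] with ω hω
  calc |f ω * f ω| = |f ω| * |f ω| := abs_mul _ _
    _ ≤ 1 * 1 := mul_le_mul hω hω (abs_nonneg _) zero_le_one
    _ = 1 := one_mul 1

lemma integral_mul_condexp (hm : m' ≤ mΩ) {h f : Ω → ℝ}
    (hh : StronglyMeasurable[m'] h) (hhb : ∀ᵐ ω ∂P, ‖h ω‖ ≤ 1)
    (hf : Integrable f P) :
    ∫ ω, h ω * f ω ∂P = ∫ ω, h ω * (P[f|m']) ω ∂P := by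
  have h1 : P[fun ω => h ω * f ω|m'] =ᵐ[P] fun ω => h ω * (P[f|m']) ω := by
    exact
      condExp_stronglyMeasurable_mul_of_bound hm hh hf 1 hhb
  calc ∫ ω, h ω * f ω ∂P = ∫ ω, (P[fun ω => h ω * f ω|m']) ω ∂P :=
        (integral_condExp hm).symm
    _ = ∫ ω, h ω * (P[f|m']) ω ∂P := integral_congr_ae h1

omit [IsProbabilityMeasure P] in
lemma condexp_abs_le_one {f : Ω → ℝ} (hbdd : ∀ᵐ ω ∂P, |f ω| ≤ 1) :
    ∀ᵐ ω ∂P, |(P[f|m']) ω| ≤ 1 := by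
  simpa using ae_bdd_condExp_of_ae_bdd (R := 1) (by simpa using hbdd)

lemma integral_sq_condexp_le (hm : m' ≤ mΩ) {f : Ω → ℝ}
    (hmeas : AEStronglyMeasurable f P) (hbdd : ∀ᵐ ω ∂P, |f ω| ≤ 1) :
    ∫ ω, ((P[f|m']) ω)^2 ∂P ≤ ∫ ω, (f ω)^2 ∂P := by
  set c : Ω → ℝ := P[f|m'] with hc
  have hint : Integrable f P := integrable_of_bdd hmeas hbdd
  have hcb : ∀ᵐ ω ∂P, |c ω| ≤ 1 := condexp_abs_le_one hbdd
  have hcm : AEStronglyMeasurable c P :=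
    (stronglyMeasurable_condExp.mono hm).aestronglyMeasurable
  have key : ∫ ω, c ω * f ω ∂P = ∫ ω, c ω * c ω ∂P :=
    integral_mul_condexp hm stronglyMeasurable_condExp
      (by simpa [Real.norm_eq_abs] using hcb) hint
  have hint_f2 : Integrable (fun ω => (f ω)^2) P := sq_integrable_of_bdd hmeas hbdd
  have hint_c2 : Integrable (fun ω => (c ω)^2) P := sq_integrable_of_bdd hcm hcb
  have hint_fc : Integrable (fun ω => c ω * f ω) P :=
    Integrable.bdd_mul hint hcm (by simpa [Real.norm_eq_abs] using hcb)
  have hsq : 0 ≤ ∫ ω, (f ω - c ω)^2 ∂P :=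
    integral_nonneg fun ω => sq_nonneg _
  have hexp : ∫ ω, (f ω - c ω)^2 ∂P
      = ∫ ω, (f ω)^2 ∂P - 2 * ∫ ω, c ω * f ω ∂P + ∫ ω, (c ω)^2 ∂P := by
    have h2 : (fun ω => (f ω - c ω)^2)
        = fun ω => ((f ω)^2 - 2 * (c ω * f ω)) + (c ω)^2 := by
      funext ω; ring
    have hA : Integrable (fun ω => (f ω)^2 - 2 * (c ω * f ω)) P :=
      hint_f2.sub (hint_fc.const_mul 2)
    rw [h2, integral_add hA hint_c2,
      integral_sub hint_f2 (hint_fc.const_mul 2), integral_const_mul]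
  rw [key] at hexp
  have h3 : ∫ ω, c ω * c ω ∂P = ∫ ω, (c ω)^2 ∂P := by
    congr 1; funext ω; rw [sq]
  rw [h3] at hexp
  nlinarith [hsq, hexp]

omit [IsProbabilityMeasure P] in
lemma variance_congr_ae {f g : Ω → ℝ} (h : f =ᵐ[P] g) :
    variance f P = variance g P := by
  have hm : ∫ ω, f ω ∂P = ∫ ω, g ω ∂P := integral_congr_ae h
  unfold variance evariance
  congr 1
  refine lintegral_congr_ae ?_
  filter_upwards [h] with ω hω
  rw [hω, hm]

lemma variance_condexp_le (hm : m' ≤ mΩ) {f : Ω → ℝ}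
    (hmeas : AEStronglyMeasurable f P) (hbdd : ∀ᵐ ω ∂P, |f ω| ≤ 1) :
    variance (P[f|m']) P ≤ variance f P := by
  have hf2 : MemLp f 2 P := memℒp2_of_bdd hmeas hbdd
  have hc2 : MemLp (P[f|m']) 2 P :=
    memℒp2_of_bdd (stronglyMeasurable_condExp.mono hm).aestronglyMeasurable
      (condexp_abs_le_one hbdd)
  rw [variance_eq_sub hf2, variance_eq_sub hc2, integral_condExp hm]
  have h1 : ∫ ω, ((P[f|m'])^2) ω ∂P ≤ ∫ ω, (f^2) ω ∂P := by
    simpa [Pi.pow_apply] using integral_sq_condexp_le hm hmeas hbdd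
  linarith

lemma variance_condexp_mono {m₁ m₂ : MeasurableSpace Ω} (h12 : m₁ ≤ m₂) (hm : m₂ ≤ mΩ)
    {f : Ω → ℝ} (hbdd : ∀ᵐ ω ∂P, |f ω| ≤ 1) :
    variance (P[f|m₁]) P ≤ variance (P[f|m₂]) P := by
  have h := condExp_condExp_of_le (μ := P) (f := f) h12 hm
  calc variance (P[f|m₁]) P = variance (P[P[f|m₂]|m₁]) P :=
        (variance_congr_ae h.symm)
    _ ≤ variance (P[f|m₂]) P :=
        variance_condexp_le (h12.trans hm)
          (stronglyMeasurable_condExp.mono hm).aestronglyMeasurable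
          (condexp_abs_le_one hbdd)

end Aux


section Pi
variable {Ω : Type*}

/-- The π-system of intersections of sets from two σ-algebras. -/
def interSets (m₁ m₂ : MeasurableSpace Ω) : Set (Set Ω) :=
  {s | ∃ t₁ t₂, MeasurableSet[m₁] t₁ ∧ MeasurableSet[m₂] t₂ ∧ s = t₁ ∩ t₂}

lemma isPiSystem_interSets (m₁ m₂ : MeasurableSpace Ω) : IsPiSystem (interSets m₁ m₂) := by
  rintro s ⟨s₁, s₂, hs₁, hs₂, rfl⟩ t ⟨t₁, t₂, ht₁, ht₂, rfl⟩ -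
  exact ⟨s₁ ∩ t₁, s₂ ∩ t₂, hs₁.inter ht₁, hs₂.inter ht₂, by
    ext ω; simp [Set.mem_inter_iff]; tauto⟩

lemma sup_eq_generateFrom_interSets (m₁ m₂ : MeasurableSpace Ω) :
    m₁ ⊔ m₂ = MeasurableSpace.generateFrom (interSets m₁ m₂) := by
  refine le_antisymm (sup_le ?_ ?_) (MeasurableSpace.generateFrom_le ?_)
  · intro s hs
    exact MeasurableSpace.measurableSet_generateFrom
      ⟨s, Set.univ, hs, MeasurableSet.univ, (Set.inter_univ s).symm⟩
  · intro s hs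
    exact MeasurableSpace.measurableSet_generateFrom
      ⟨Set.univ, s, MeasurableSet.univ, hs, (Set.univ_inter s).symm⟩
  · rintro s ⟨t₁, t₂, ht₁, ht₂, rfl⟩
    exact ((le_sup_left : m₁ ≤ m₁ ⊔ m₂) t₁ ht₁).inter
      ((le_sup_right : m₂ ≤ m₁ ⊔ m₂) t₂ ht₂)

variable {mΩ : MeasurableSpace Ω} {P : Measure Ω} [IsProbabilityMeasure P]

/-- If two integrable functions have equal integrals on all intersections of sets from
two sub-σ-algebras, they have equal integrals on all sets of the sup σ-algebra. -/
lemma setIntegral_eq_on_sup {m₁ m₂ : MeasurableSpace Ω} (h₁ : m₁ ≤ mΩ) (h₂ : m₂ ≤ mΩ)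
    {f g : Ω → ℝ} (hf : Integrable f P) (hg : Integrable g P)
    (hpi : ∀ s t, MeasurableSet[m₁] s → MeasurableSet[m₂] t →
      ∫ ω in s ∩ t, f ω ∂P = ∫ ω in s ∩ t, g ω ∂P) :
    ∀ s, MeasurableSet[m₁ ⊔ m₂] s → ∫ ω in s, f ω ∂P = ∫ ω in s, g ω ∂P := by
  have hsup : m₁ ⊔ m₂ ≤ mΩ := sup_le h₁ h₂
  have huniv : ∫ ω, f ω ∂P = ∫ ω, g ω ∂P := by
    simpa using hpi Set.univ Set.univ MeasurableSet.univ MeasurableSet.univ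
  intro s hs
  refine MeasurableSpace.induction_on_inter (m := m₁ ⊔ m₂)
    (C := fun s _ => ∫ ω in s, f ω ∂P = ∫ ω in s, g ω ∂P)
    (sup_eq_generateFrom_interSets m₁ m₂)
    (isPiSystem_interSets m₁ m₂) (by simp) ?_ ?_ ?_ _ hs
  · rintro t ⟨t₁, t₂, ht₁, ht₂, rfl⟩
    exact hpi t₁ t₂ ht₁ ht₂
  · intro t ht hteq
    have ht' : MeasurableSet[mΩ] t := hsup t ht
    clear hpi hs ht hsup
    clear h₁ h₂ m₁ m₂
    have hfc := integral_add_compl ht' hf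
    have hgc := integral_add_compl ht' hg
    linarith
  · intro u hdisj hmeas heq
    have hmeas' : ∀ i, MeasurableSet[mΩ] (u i) := fun i => hsup _ (hmeas i)
    clear hpi hs hmeas hsup
    clear h₁ h₂ m₁ m₂
    have h1 : HasSum (fun i => ∫ ω in u i, f ω ∂P) (∫ ω in ⋃ i, u i, f ω ∂P) :=
      hasSum_integral_iUnion hmeas' hdisj hf.integrableOn
    have h2 : HasSum (fun i => ∫ ω in u i, g ω ∂P) (∫ ω in ⋃ i, u i, g ω ∂P) :=
      hasSum_integral_iUnion hmeas' hdisj hg.integrableOn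
    rw [funext heq] at h1
    exact h1.unique h2

end Pi


noncomputable section AC
namespace AC
variable {Ω : Type*} {m m₁ m₂ : MeasurableSpace Ω} [mΩ : MeasurableSpace Ω]
  {P : Measure Ω} [IsProbabilityMeasure P]

/-- the indicator of `{Y ≥ y}` -/
def indf {Ω : Type*} (Y : Ω → ℝ) (y : ℝ) : Ω → ℝ :=
  Set.indicator {ω | y ≤ Y ω} fun _ => (1 : ℝ)

/-- one minus the cdf -/
def Fbar {Ω : Type*} [MeasurableSpace Ω] (P : Measure Ω) (Y : Ω → ℝ) (y : ℝ) : ℝ :=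
  (P {ω | y ≤ Y ω}).toReal

/-- second moment of the conditional expectation -/
def H {Ω : Type*} (m : MeasurableSpace Ω) [mΩ : MeasurableSpace Ω] (P : Measure Ω)
    (Y : Ω → ℝ) (y : ℝ) : ℝ :=
  ∫ ω, ((P[indf Y y|m]) ω)^2 ∂P

/-- numerator integrand of `xiSigma` -/
def Num {Ω : Type*} (m : MeasurableSpace Ω) [mΩ : MeasurableSpace Ω] (P : Measure Ω)
    (Y : Ω → ℝ) (y : ℝ) : ℝ :=
  variance (P[indf Y y|m]) P

lemma measurableSet_indf {Y : Ω → ℝ} (hY : Measurable Y) (y : ℝ) :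
    MeasurableSet {ω | y ≤ Y ω} := by
  have : {ω | y ≤ Y ω} = Y ⁻¹' Set.Ici y := rfl
  rw [this]; exact hY measurableSet_Ici

lemma indf_stronglyMeasurable {Y : Ω → ℝ} (hY : Measurable Y) (y : ℝ) :
    StronglyMeasurable (indf Y y) :=
  stronglyMeasurable_const.indicator (measurableSet_indf hY y)

lemma indf_nonneg (Y : Ω → ℝ) (y : ℝ) (ω : Ω) : 0 ≤ indf Y y ω :=
  Set.indicator_nonneg (fun _ _ => zero_le_one) ω

lemma indf_le_one (Y : Ω → ℝ) (y : ℝ) (ω : Ω) : indf Y y ω ≤ 1 := by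
  unfold indf; by_cases h : ω ∈ {ω | y ≤ Y ω} <;>
    simp [Set.indicator_apply, h]

lemma abs_indf_le_one (Y : Ω → ℝ) (y : ℝ) : ∀ᵐ ω ∂P, |indf Y y ω| ≤ 1 :=
  Filter.Eventually.of_forall fun ω =>
    abs_le.2 ⟨by linarith [indf_nonneg Y y ω], indf_le_one Y y ω⟩

lemma indf_antitone (Y : Ω → ℝ) {y y' : ℝ} (h : y ≤ y') (ω : Ω) :
    indf Y y' ω ≤ indf Y y ω := by
  unfold indf
  by_cases h' : ω ∈ {ω | y' ≤ Y ω}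
  · have : ω ∈ {ω | y ≤ Y ω} := le_trans h h'
    simp [Set.indicator_apply, h', this]
  · simp only [Set.indicator_apply, h', if_false]
    exact indf_nonneg Y y ω

lemma sq_indf (Y : Ω → ℝ) (y : ℝ) : (fun ω => (indf Y y ω)^2) = indf Y y := by
  funext ω; unfold indf
  by_cases h : ω ∈ {ω | y ≤ Y ω} <;> simp [Set.indicator_apply, h]

lemma indf_memℒp2 {Y : Ω → ℝ} (hY : Measurable Y) (y : ℝ) : MemLp (indf Y y) 2 P :=
  MemLp.of_bound (indf_stronglyMeasurable hY y).aestronglyMeasurable 1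
    (by simpa [Real.norm_eq_abs] using abs_indf_le_one (P := P) Y y)

lemma indf_integrable {Y : Ω → ℝ} (hY : Measurable Y) (y : ℝ) : Integrable (indf Y y) P :=
  (indf_memℒp2 hY y).integrable one_le_two

lemma integral_indf {Y : Ω → ℝ} (hY : Measurable Y) (y : ℝ) :
    ∫ ω, indf Y y ω ∂P = Fbar P Y y := by
  have := integral_indicator_one (μ := P) (measurableSet_indf hY y)
  rw [measureReal_def] at this; exact this

lemma den_eq {Y : Ω → ℝ} (hY : Measurable Y) (y : ℝ) :
    variance (indf Y y) P = Fbar P Y y - (Fbar P Y y)^2 := by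
  rw [variance_eq_sub (indf_memℒp2 hY y)]
  have h1 : (indf Y y)^2 = indf Y y := by
    funext ω; exact congrFun (sq_indf Y y) ω
  rw [h1]
  rw [show ∫ ω, indf Y y ω ∂P = Fbar P Y y from integral_indf hY y]

lemma num_eq (hm : m ≤ mΩ) {Y : Ω → ℝ} (hY : Measurable Y) (y : ℝ) :
    Num m P Y y = H m P Y y - (Fbar P Y y)^2 := by
  have hc2 : MemLp (P[indf Y y|m]) 2 P :=
    MemLp.of_bound (stronglyMeasurable_condExp.mono hm).aestronglyMeasurable 1
      (by simpa [Real.norm_eq_abs] using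
        condexp_abs_le_one (m' := m) (abs_indf_le_one (P := P) Y y))
  rw [Num, variance_eq_sub hc2, integral_condExp hm]
  rw [show ∫ ω, indf Y y ω ∂P = Fbar P Y y from integral_indf hY y]
  rfl

lemma H_antitone (hm : m ≤ mΩ) {Y : Ω → ℝ} (hY : Measurable Y) :
    Antitone (H m P Y) := by
  intro y y' h
  have h1 : P[indf Y y'|m] ≤ᵐ[P] P[indf Y y|m] :=
    condExp_mono (indf_integrable hY y') (indf_integrable hY y)
      (Filter.Eventually.of_forall (indf_antitone Y h))
  have h0 : 0 ≤ᵐ[P] P[indf Y y'|m] :=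
    condExp_nonneg (Filter.Eventually.of_forall (indf_nonneg Y y'))
  refine integral_mono_ae ?_ ?_ ?_
  · exact sq_integrable_of_bdd (stronglyMeasurable_condExp.mono hm).aestronglyMeasurable
      (condexp_abs_le_one (abs_indf_le_one (P := P) Y y'))
  · exact sq_integrable_of_bdd (stronglyMeasurable_condExp.mono hm).aestronglyMeasurable
      (condexp_abs_le_one (abs_indf_le_one (P := P) Y y))
  · filter_upwards [h1, h0] with ω h1ω h0ω
    exact pow_le_pow_left₀ h0ω h1ω 2

lemma Fbar_nonneg (Y : Ω → ℝ) (y : ℝ) : 0 ≤ Fbar P Y y := ENNReal.toReal_nonneg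

lemma Fbar_le_one (Y : Ω → ℝ) (y : ℝ) : Fbar P Y y ≤ 1 := by
  unfold Fbar
  rw [show (1 : ℝ) = (1 : ENNReal).toReal from rfl]
  exact ENNReal.toReal_mono ENNReal.one_ne_top prob_le_one

lemma Fbar_antitone (Y : Ω → ℝ) : Antitone (Fbar P Y) := by
  intro y y' h
  exact ENNReal.toReal_mono (measure_ne_top P _)
    (measure_mono fun ω (hω : y' ≤ Y ω) => le_trans h hω)

lemma num_measurable (hm : m ≤ mΩ) {Y : Ω → ℝ} (hY : Measurable Y) :
    Measurable (fun y => Num m P Y y) := by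
  have he : (fun y => Num m P Y y)
      = fun y => H m P Y y - (Fbar P Y y)^2 := funext (num_eq hm hY)
  rw [he]
  exact ((H_antitone hm hY).measurable).sub ((Fbar_antitone Y).measurable.pow_const 2)

lemma den_measurable {Y : Ω → ℝ} (hY : Measurable Y) :
    Measurable (fun y => variance (indf Y y) P) := by
  have he : (fun y => variance (indf Y y) P)
      = fun y => Fbar P Y y - (Fbar P Y y)^2 := funext (den_eq hY)
  rw [he]
  exact ((Fbar_antitone Y).measurable).sub ((Fbar_antitone Y).measurable.pow_const 2)

lemma num_le_den (hm : m ≤ mΩ) {Y : Ω → ℝ} (hY : Measurable Y) (y : ℝ) :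
    Num m P Y y ≤ variance (indf Y y) P :=
  variance_condexp_le hm (indf_stronglyMeasurable hY y).aestronglyMeasurable
    (abs_indf_le_one Y y)

lemma den_le_one {Y : Ω → ℝ} (hY : Measurable Y) (y : ℝ) :
    variance (indf Y y) P ≤ 1 := by
  rw [den_eq hY]
  nlinarith [Fbar_nonneg (P := P) Y y, Fbar_le_one (P := P) Y y]

lemma num_integrable (hm : m ≤ mΩ) {Y : Ω → ℝ} (hY : Measurable Y) :
    Integrable (fun y => Num m P Y y) (P.map Y) := by
  haveI : IsProbabilityMeasure (P.map Y) := Measure.isProbabilityMeasure_map hY.aemeasurable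
  refine integrable_of_bdd (num_measurable hm hY).aestronglyMeasurable ?_
  refine Filter.Eventually.of_forall fun y => abs_le.2 ⟨?_, ?_⟩
  · have h0 : (0:ℝ) ≤ Num m P Y y := variance_nonneg _ _
    linarith
  · exact le_trans (num_le_den hm hY y) (den_le_one hY y)

lemma den_integrable {Y : Ω → ℝ} (hY : Measurable Y) :
    Integrable (fun y => variance (indf Y y) P) (P.map Y) := by
  haveI : IsProbabilityMeasure (P.map Y) := Measure.isProbabilityMeasure_map hY.aemeasurable
  refine integrable_of_bdd (den_measurable hY).aestronglyMeasurable ?_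
  refine Filter.Eventually.of_forall fun y => abs_le.2 ⟨?_, den_le_one hY y⟩
  linarith [variance_nonneg (indf Y y) P]

end AC
end AC
noncomputable section AC2
namespace AC
variable {Ω : Type*} {m m₁ m₂ : MeasurableSpace Ω} [mΩ : MeasurableSpace Ω]
  {P : Measure Ω} [IsProbabilityMeasure P]

lemma xiSigma_eq (Y : Ω → ℝ) :
    xiSigma m P Y = (∫ y, Num m P Y y ∂(P.map Y)) /
      (∫ y, variance (indf Y y) P ∂(P.map Y)) := rfl

lemma xiSigma_nonneg (Y : Ω → ℝ) : 0 ≤ xiSigma m P Y := by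
  rw [xiSigma_eq]
  exact div_nonneg (integral_nonneg fun y => variance_nonneg _ _)
    (integral_nonneg fun y => variance_nonneg _ _)

lemma xiSigma_le_one (hm : m ≤ mΩ) {Y : Ω → ℝ} (hY : Measurable Y) :
    xiSigma m P Y ≤ 1 := by
  rw [xiSigma_eq]
  refine div_le_one_of_le₀ ?_ (integral_nonneg fun y => variance_nonneg _ _)
  exact integral_mono (num_integrable hm hY) (den_integrable hY) (num_le_den hm hY)

lemma xiSigma_mono_of_num (hm₁ : m₁ ≤ mΩ) (hm₂ : m₂ ≤ mΩ) {Y : Ω → ℝ} (hY : Measurable Y)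
    (hnum : ∀ y, Num m₁ P Y y ≤ Num m₂ P Y y) :
    xiSigma m₁ P Y ≤ xiSigma m₂ P Y := by
  rw [xiSigma_eq, xiSigma_eq, div_eq_mul_inv, div_eq_mul_inv]
  refine mul_le_mul_of_nonneg_right ?_
    (inv_nonneg.2 (integral_nonneg fun y => variance_nonneg _ _))
  exact integral_mono (num_integrable hm₁ hY) (num_integrable hm₂ hY) hnum

lemma xiSigma_mono (h12 : m₁ ≤ m₂) (hm₂ : m₂ ≤ mΩ) {Y : Ω → ℝ} (hY : Measurable Y) :
    xiSigma m₁ P Y ≤ xiSigma m₂ P Y :=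
  xiSigma_mono_of_num (h12.trans hm₂) hm₂ hY fun y =>
    variance_condexp_mono h12 hm₂ (abs_indf_le_one Y y)

/-- purely arithmetic comparison for `T` -/
lemma T_alg {q : ℕ} {a b c : Fin q → ℝ} (hab : ∀ i, a i ≤ b i) (hc : ∀ i, c i ≤ 1) :
    1 - ((q : ℝ) - ∑ i, a i) / ((q : ℝ) - ∑ i, c i)
      ≤ 1 - ((q : ℝ) - ∑ i, b i) / ((q : ℝ) - ∑ i, c i) := by
  have hd : 0 ≤ (q : ℝ) - ∑ i, c i := by
    have h1 : ∑ i, c i ≤ ∑ _i : Fin q, (1 : ℝ) :=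
      Finset.sum_le_sum fun i _ => hc i
    simp only [Finset.sum_const, Finset.card_univ, Fintype.card_fin, nsmul_eq_mul,
      mul_one] at h1
    linarith
  have hab' : (q : ℝ) - ∑ i, b i ≤ (q : ℝ) - ∑ i, a i := by
    have := Finset.sum_le_sum fun i (_ : i ∈ Finset.univ) => hab i
    linarith
  rw [div_eq_mul_inv, div_eq_mul_inv]
  have h2 := mul_le_mul_of_nonneg_right hab' (inv_nonneg.2 hd)
  linarith

lemma sigmaPast_le {q : ℕ} {Y : Fin q → Ω → ℝ} (hY : ∀ j, Measurable (Y j)) (i : Fin q) :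
    sigmaPast Y i ≤ mΩ :=
  iSup_le fun j => iSup_le fun _ => (hY j).comap_le

lemma comap_le_comap_vec {q : ℕ} {Y : Fin q → Ω → ℝ} (j : Fin q) :
    MeasurableSpace.comap (Y j) inferInstance
      ≤ MeasurableSpace.comap (fun ω => fun i => Y i ω) (MeasurableSpace.pi) := by
  have h1 : Y j = (fun v : Fin q → ℝ => v j) ∘ (fun ω => fun i => Y i ω) := rfl
  rw [h1, ← MeasurableSpace.comap_comp]
  exact MeasurableSpace.comap_mono (measurable_pi_apply j).comap_le

lemma sigmaPast_le_vec {q : ℕ} {Y : Fin q → Ω → ℝ} (i : Fin q) :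
    sigmaPast Y i ≤ MeasurableSpace.comap (fun ω => fun i => Y i ω) MeasurableSpace.pi :=
  iSup_le fun j => iSup_le fun _ => comap_le_comap_vec j

end AC
end AC2
noncomputable section CI
namespace AC
open MeasurableSpace

variable {Ω : Type*} {mB mV : MeasurableSpace Ω} [mΩ : MeasurableSpace Ω]
  {P : Measure Ω} [IsProbabilityMeasure P]
  {β γ : Type*} [MeasurableSpace β] [MeasurableSpace γ] {X : Ω → β} {Z : Ω → γ}

lemma sm_ind {m : MeasurableSpace Ω} {C : Set Ω} (hC : MeasurableSet[m] C) :
    StronglyMeasurable[m] (Set.indicator C fun _ => (1 : ℝ)) :=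
  stronglyMeasurable_const.indicator hC

lemma norm_ind_le (C : Set Ω) (ω : Ω) : ‖Set.indicator C (fun _ => (1 : ℝ)) ω‖ ≤ 1 := by
  by_cases h : ω ∈ C <;> simp [Set.indicator_apply, h]

lemma ind_mul_ind (C A : Set Ω) (ω : Ω) :
    Set.indicator C (fun _ => (1 : ℝ)) ω * Set.indicator A (fun _ => (1 : ℝ)) ω
      = Set.indicator (C ∩ A) (fun _ => (1 : ℝ)) ω := by
  by_cases hC : ω ∈ C <;> by_cases hA : ω ∈ A <;>
    simp [Set.indicator_apply, hC, hA, Set.mem_inter_iff]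

lemma ind_integrable' {C : Set Ω} (hC : MeasurableSet[mΩ] C) :
    Integrable (Set.indicator C fun _ => (1 : ℝ)) P :=
  integrable_of_bdd (sm_ind hC).aestronglyMeasurable
    (Filter.Eventually.of_forall fun ω => by
      simpa [Real.norm_eq_abs] using norm_ind_le C ω)

lemma setIntegral_inter_eq {C A : Set Ω} (hC : MeasurableSet[mΩ] C)
    (hA : MeasurableSet[mΩ] A) (h : Ω → ℝ) :
    ∫ ω in C ∩ A, h ω ∂P = ∫ ω, Set.indicator C (fun _ => (1 : ℝ)) ω *
      Set.indicator A (fun _ => (1 : ℝ)) ω * h ω ∂P := by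
  rw [← integral_indicator (hC.inter hA)]
  congr 1; funext ω
  by_cases hc : ω ∈ C <;> by_cases ha : ω ∈ A <;>
    simp [Set.indicator_apply, hc, ha, Set.mem_inter_iff]

/-- Weak union, easy direction: the conditional probability of a `Z`-set given
`σ(X) ⊔ mB` equals the one given `σ(X)` alone, when `(Y, mB) ⟂ Z | X`. -/
lemma condexp_ind_sup_eq (hX : Measurable X) (hZ : Measurable Z)
    (hmB : mB ≤ mΩ) (hBV : mB ≤ mV) (hV : mV ≤ mΩ)
    (hprod : ∀ A B : Set Ω, MeasurableSet[mV] A →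
      MeasurableSet[MeasurableSpace.comap Z inferInstance] B →
      (P⟦A ∩ B | MeasurableSpace.comap X inferInstance⟧)
        =ᵐ[P] (P⟦A | MeasurableSpace.comap X inferInstance⟧)
          * (P⟦B | MeasurableSpace.comap X inferInstance⟧))
    {B : Set Ω} (hB : MeasurableSet[MeasurableSpace.comap Z inferInstance] B) :
    P[Set.indicator B (fun _ => (1 : ℝ)) | MeasurableSpace.comap X inferInstance ⊔ mB]
      =ᵐ[P] P⟦B | MeasurableSpace.comap X inferInstance⟧ := by
  have hmX : MeasurableSpace.comap X inferInstance ≤ mΩ := hX.comap_le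
  have hmZ : MeasurableSpace.comap Z inferInstance ≤ mΩ := hZ.comap_le
  have hm : MeasurableSpace.comap X inferInstance ⊔ mB ≤ mΩ := sup_le hmX hmB
  have hBΩ : MeasurableSet[mΩ] B := hmZ B hB
  have hindB : Integrable (Set.indicator B fun _ => (1 : ℝ)) P := ind_integrable' hBΩ
  have hk_bdd : ∀ᵐ ω ∂P, |(P⟦B | MeasurableSpace.comap X inferInstance⟧) ω| ≤ 1 :=
    condexp_abs_le_one (Filter.Eventually.of_forall fun ω => by
      simpa [Real.norm_eq_abs] using norm_ind_le B ω)
  refine (ae_eq_condExp_of_forall_setIntegral_eq hm hindB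
    (fun s _ _ => integrable_condExp.integrableOn) ?_
    ((stronglyMeasurable_condExp (m := MeasurableSpace.comap X inferInstance) (μ := P)
      (f := Set.indicator B fun _ => (1 : ℝ))).mono
      (le_sup_left : MeasurableSpace.comap X inferInstance ≤ MeasurableSpace.comap X inferInstance ⊔ mB)).aestronglyMeasurable).symm
  intro s hs _
  refine setIntegral_eq_on_sup hmX hmB integrable_condExp hindB ?_ s hs
  intro C A hC hA
  have hCΩ : MeasurableSet[mΩ] C := hmX C hC
  have hAΩ : MeasurableSet[mΩ] A := hmB A hA
  rw [setIntegral_inter_eq hCΩ hAΩ, setIntegral_inter_eq hCΩ hAΩ]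
  -- LHS: ∫ 1_C 1_A k = ∫ 1_C k P[1_A | mX]
  have hCk_sm : StronglyMeasurable[MeasurableSpace.comap X inferInstance]
      (fun ω => Set.indicator C (fun _ => (1 : ℝ)) ω *
        (P⟦B | MeasurableSpace.comap X inferInstance⟧) ω) :=
    (sm_ind hC).mul stronglyMeasurable_condExp
  have hCk_bdd : ∀ᵐ ω ∂P, ‖Set.indicator C (fun _ => (1 : ℝ)) ω *
      (P⟦B | MeasurableSpace.comap X inferInstance⟧) ω‖ ≤ 1 := by
    filter_upwards [hk_bdd] with ω hω
    rw [norm_mul]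
    calc ‖Set.indicator C (fun _ => (1:ℝ)) ω‖ * ‖(P⟦B | MeasurableSpace.comap X inferInstance⟧) ω‖
        ≤ 1 * 1 := by
          refine mul_le_mul (norm_ind_le C ω) ?_ (norm_nonneg _) zero_le_one
          simpa [Real.norm_eq_abs] using hω
      _ = 1 := one_mul 1
  have hLHS : ∫ ω, Set.indicator C (fun _ => (1 : ℝ)) ω * Set.indicator A (fun _ => (1 : ℝ)) ω *
        (P⟦B | MeasurableSpace.comap X inferInstance⟧) ω ∂P
      = ∫ ω, (Set.indicator C (fun _ => (1 : ℝ)) ω *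
          (P⟦B | MeasurableSpace.comap X inferInstance⟧) ω) *
          (P[Set.indicator A (fun _ => (1:ℝ)) | MeasurableSpace.comap X inferInstance]) ω ∂P := by
    rw [← integral_mul_condexp hmX hCk_sm hCk_bdd (ind_integrable' hAΩ)]
    exact integral_congr_ae (Filter.Eventually.of_forall fun ω => by ring)
  -- RHS: ∫ 1_C 1_{A∩B} = ∫ 1_C P[1_{A∩B}|mX] = ∫ 1_C (P[1_A|mX] k)
  have hAB : MeasurableSet[mΩ] (A ∩ B) := hAΩ.inter hBΩ
  have hC_sm : StronglyMeasurable[MeasurableSpace.comap X inferInstance]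
      (Set.indicator C fun _ => (1 : ℝ)) := sm_ind hC
  have hRHS : ∫ ω, Set.indicator C (fun _ => (1 : ℝ)) ω * Set.indicator A (fun _ => (1 : ℝ)) ω *
        Set.indicator B (fun _ => (1 : ℝ)) ω ∂P
      = ∫ ω, Set.indicator C (fun _ => (1 : ℝ)) ω *
          (P[Set.indicator (A ∩ B) (fun _ => (1:ℝ)) | MeasurableSpace.comap X inferInstance]) ω ∂P := by
    rw [← integral_mul_condexp hmX hC_sm
      (Filter.Eventually.of_forall (norm_ind_le C)) (ind_integrable' hAB)]
    refine integral_congr_ae (Filter.Eventually.of_forall fun ω => ?_)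
    simp only []
    rw [mul_assoc, ind_mul_ind A B ω]
  rw [hLHS, hRHS]
  -- now use hprod on A ∩ B
  have hAV : MeasurableSet[mV] A := hBV A hA
  have hp := hprod A B hAV hB
  refine integral_congr_ae ?_
  filter_upwards [hp] with ω hω
  simp only [Pi.mul_apply] at hω
  show _ * _ * _ = _ * _
  rw [hω]
  ring

/-- Main step: under conditional independence, the conditional expectation of an
`mV`-indicator given `σ(Z) ⊔ mB` factors through `σ(X) ⊔ mB`. -/
lemma condexp_tower_CI (hX : Measurable X) (hZ : Measurable Z)
    (hmB : mB ≤ mΩ) (hBV : mB ≤ mV) (hV : mV ≤ mΩ)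
    (hprod : ∀ A B : Set Ω, MeasurableSet[mV] A →
      MeasurableSet[MeasurableSpace.comap Z inferInstance] B →
      (P⟦A ∩ B | MeasurableSpace.comap X inferInstance⟧)
        =ᵐ[P] (P⟦A | MeasurableSpace.comap X inferInstance⟧)
          * (P⟦B | MeasurableSpace.comap X inferInstance⟧))
    {A₀ : Set Ω} (hA₀ : MeasurableSet[mV] A₀) :
    P[P[Set.indicator A₀ (fun _ => (1:ℝ)) | MeasurableSpace.comap X inferInstance ⊔ mB]
        | MeasurableSpace.comap Z inferInstance ⊔ mB]
      =ᵐ[P] P[Set.indicator A₀ (fun _ => (1:ℝ)) | MeasurableSpace.comap Z inferInstance ⊔ mB] := by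
  have hmX : MeasurableSpace.comap X inferInstance ≤ mΩ := hX.comap_le
  have hmZ : MeasurableSpace.comap Z inferInstance ≤ mΩ := hZ.comap_le
  have hmXB : MeasurableSpace.comap X inferInstance ⊔ mB ≤ mΩ := sup_le hmX hmB
  have hmZB : MeasurableSpace.comap Z inferInstance ⊔ mB ≤ mΩ := sup_le hmZ hmB
  have hA₀Ω : MeasurableSet[mΩ] A₀ := hV A₀ hA₀
  have hindA₀ : Integrable (Set.indicator A₀ fun _ => (1 : ℝ)) P := ind_integrable' hA₀Ω
  -- g is the conditional expectation given σ(X) ⊔ mB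
  have hg_bdd : ∀ᵐ ω ∂P,
      |(P[Set.indicator A₀ (fun _ => (1:ℝ)) | MeasurableSpace.comap X inferInstance ⊔ mB]) ω| ≤ 1 :=
    condexp_abs_le_one (Filter.Eventually.of_forall fun ω => by
      simpa [Real.norm_eq_abs] using norm_ind_le A₀ ω)
  refine ae_eq_condExp_of_forall_setIntegral_eq hmZB hindA₀
    (fun s _ _ => integrable_condExp.integrableOn) ?_
    stronglyMeasurable_condExp.aestronglyMeasurable
  intro s hs _
  rw [setIntegral_condExp hmZB integrable_condExp hs]
  refine setIntegral_eq_on_sup hmZ hmB integrable_condExp hindA₀ ?_ s hs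
  intro B A hB hA
  have hBΩ : MeasurableSet[mΩ] B := hmZ B hB
  have hAΩ : MeasurableSet[mΩ] A := hmB A hA
  rw [setIntegral_inter_eq hBΩ hAΩ, setIntegral_inter_eq hBΩ hAΩ]
  have hk_bdd : ∀ᵐ ω ∂P, |(P⟦B | MeasurableSpace.comap X inferInstance⟧) ω| ≤ 1 :=
    condexp_abs_le_one (Filter.Eventually.of_forall fun ω => by
      simpa [Real.norm_eq_abs] using norm_ind_le B ω)
  -- step (i): ∫ 1_B 1_A g = ∫ 1_A g k
  have hAg_sm : StronglyMeasurable[MeasurableSpace.comap X inferInstance ⊔ mB]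
      (fun ω => Set.indicator A (fun _ => (1 : ℝ)) ω *
        (P[Set.indicator A₀ (fun _ => (1:ℝ)) | MeasurableSpace.comap X inferInstance ⊔ mB]) ω) := by
    have h1 : StronglyMeasurable[MeasurableSpace.comap X inferInstance ⊔ mB]
        (Set.indicator A fun _ => (1 : ℝ)) := (sm_ind hA).mono le_sup_right
    have h2 : StronglyMeasurable[MeasurableSpace.comap X inferInstance ⊔ mB]
        (P[Set.indicator A₀ (fun _ => (1:ℝ)) | MeasurableSpace.comap X inferInstance ⊔ mB]) :=
      stronglyMeasurable_condExp
    exact h1.mul h2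
  have hAg_bdd : ∀ᵐ ω ∂P, ‖Set.indicator A (fun _ => (1 : ℝ)) ω *
      (P[Set.indicator A₀ (fun _ => (1:ℝ)) | MeasurableSpace.comap X inferInstance ⊔ mB]) ω‖ ≤ 1 := by
    filter_upwards [hg_bdd] with ω hω
    rw [norm_mul]
    calc _ ≤ 1 * 1 := by
          refine mul_le_mul (norm_ind_le A ω) ?_ (norm_nonneg _) zero_le_one
          simpa [Real.norm_eq_abs] using hω
      _ = (1:ℝ) := one_mul 1
  have step1 : ∫ ω, Set.indicator B (fun _ => (1 : ℝ)) ω * Set.indicator A (fun _ => (1 : ℝ)) ω *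
        (P[Set.indicator A₀ (fun _ => (1:ℝ)) | MeasurableSpace.comap X inferInstance ⊔ mB]) ω ∂P
      = ∫ ω, Set.indicator A (fun _ => (1 : ℝ)) ω *
          (P[Set.indicator A₀ (fun _ => (1:ℝ)) | MeasurableSpace.comap X inferInstance ⊔ mB]) ω *
          (P⟦B | MeasurableSpace.comap X inferInstance⟧) ω ∂P := by
    have hwu := condexp_ind_sup_eq (P := P) hX hZ hmB hBV hV hprod hB
    have h1 : ∫ ω, (Set.indicator A (fun _ => (1 : ℝ)) ω *
          (P[Set.indicator A₀ (fun _ => (1:ℝ)) | MeasurableSpace.comap X inferInstance ⊔ mB]) ω) *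
          Set.indicator B (fun _ => (1 : ℝ)) ω ∂P
        = ∫ ω, (Set.indicator A (fun _ => (1 : ℝ)) ω *
          (P[Set.indicator A₀ (fun _ => (1:ℝ)) | MeasurableSpace.comap X inferInstance ⊔ mB]) ω) *
          (P[Set.indicator B (fun _ => (1:ℝ)) | MeasurableSpace.comap X inferInstance ⊔ mB]) ω ∂P :=
      integral_mul_condexp hmXB hAg_sm hAg_bdd (ind_integrable' hBΩ)
    calc ∫ ω, Set.indicator B (fun _ => (1 : ℝ)) ω * Set.indicator A (fun _ => (1 : ℝ)) ω *
          (P[Set.indicator A₀ (fun _ => (1:ℝ)) | MeasurableSpace.comap X inferInstance ⊔ mB]) ω ∂P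
        = ∫ ω, (Set.indicator A (fun _ => (1 : ℝ)) ω *
            (P[Set.indicator A₀ (fun _ => (1:ℝ)) | MeasurableSpace.comap X inferInstance ⊔ mB]) ω) *
            Set.indicator B (fun _ => (1 : ℝ)) ω ∂P :=
          integral_congr_ae (Filter.Eventually.of_forall fun ω => by ring)
      _ = ∫ ω, (Set.indicator A (fun _ => (1 : ℝ)) ω *
            (P[Set.indicator A₀ (fun _ => (1:ℝ)) | MeasurableSpace.comap X inferInstance ⊔ mB]) ω) *
            (P[Set.indicator B (fun _ => (1:ℝ)) | MeasurableSpace.comap X inferInstance ⊔ mB]) ω ∂P := h1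
      _ = ∫ ω, Set.indicator A (fun _ => (1 : ℝ)) ω *
            (P[Set.indicator A₀ (fun _ => (1:ℝ)) | MeasurableSpace.comap X inferInstance ⊔ mB]) ω *
            (P⟦B | MeasurableSpace.comap X inferInstance⟧) ω ∂P := by
          refine integral_congr_ae ?_
          filter_upwards [hwu] with ω hω
          rw [hω]
  -- step (ii): ∫ 1_A k g = ∫ 1_A k 1_{A₀}
  have hAk_sm : StronglyMeasurable[MeasurableSpace.comap X inferInstance ⊔ mB]
      (fun ω => Set.indicator A (fun _ => (1 : ℝ)) ω *
        (P⟦B | MeasurableSpace.comap X inferInstance⟧) ω) := by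
    have h1 : StronglyMeasurable[MeasurableSpace.comap X inferInstance ⊔ mB]
        (Set.indicator A fun _ => (1 : ℝ)) := (sm_ind hA).mono le_sup_right
    have h2 : StronglyMeasurable[MeasurableSpace.comap X inferInstance ⊔ mB]
        (P⟦B | MeasurableSpace.comap X inferInstance⟧) :=
      stronglyMeasurable_condExp.mono le_sup_left
    exact h1.mul h2
  have hAk_bdd : ∀ᵐ ω ∂P, ‖Set.indicator A (fun _ => (1 : ℝ)) ω *
      (P⟦B | MeasurableSpace.comap X inferInstance⟧) ω‖ ≤ 1 := by
    filter_upwards [hk_bdd] with ω hω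
    rw [norm_mul]
    calc _ ≤ 1 * 1 := by
          refine mul_le_mul (norm_ind_le A ω) ?_ (norm_nonneg _) zero_le_one
          simpa [Real.norm_eq_abs] using hω
      _ = (1:ℝ) := one_mul 1
  have step2 : ∫ ω, Set.indicator A (fun _ => (1 : ℝ)) ω *
        (P⟦B | MeasurableSpace.comap X inferInstance⟧) ω *
        Set.indicator A₀ (fun _ => (1 : ℝ)) ω ∂P
      = ∫ ω, Set.indicator A (fun _ => (1 : ℝ)) ω *
        (P⟦B | MeasurableSpace.comap X inferInstance⟧) ω *
        (P[Set.indicator A₀ (fun _ => (1:ℝ)) | MeasurableSpace.comap X inferInstance ⊔ mB]) ω ∂P :=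
    integral_mul_condexp hmXB hAk_sm hAk_bdd hindA₀
  -- step (iii): ∫ 1_B 1_A 1_{A₀} = ∫ 1_A k 1_{A₀}  (via the product rule on A ∩ A₀)
  have hAA₀V : MeasurableSet[mV] (A ∩ A₀) := (hBV A hA).inter hA₀
  have hAA₀Ω : MeasurableSet[mΩ] (A ∩ A₀) := hAΩ.inter hA₀Ω
  have hk_sm : StronglyMeasurable[MeasurableSpace.comap X inferInstance]
      (P⟦B | MeasurableSpace.comap X inferInstance⟧ : Ω → ℝ) := stronglyMeasurable_condExp
  have hp := hprod (A ∩ A₀) B hAA₀V hB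
  have step3 : ∫ ω, Set.indicator B (fun _ => (1 : ℝ)) ω * Set.indicator A (fun _ => (1 : ℝ)) ω *
        Set.indicator A₀ (fun _ => (1 : ℝ)) ω ∂P
      = ∫ ω, Set.indicator A (fun _ => (1 : ℝ)) ω *
        (P⟦B | MeasurableSpace.comap X inferInstance⟧) ω *
        Set.indicator A₀ (fun _ => (1 : ℝ)) ω ∂P := by
    have e1 : ∫ ω, Set.indicator B (fun _ => (1 : ℝ)) ω * Set.indicator A (fun _ => (1 : ℝ)) ω *
          Set.indicator A₀ (fun _ => (1 : ℝ)) ω ∂P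
        = ∫ ω, (P[Set.indicator ((A ∩ A₀) ∩ B) (fun _ => (1:ℝ)) |
            MeasurableSpace.comap X inferInstance]) ω ∂P := by
      rw [integral_condExp hmX]
      refine integral_congr_ae (Filter.Eventually.of_forall fun ω => ?_)
      beta_reduce
      rw [← ind_mul_ind (A ∩ A₀) B ω, ← ind_mul_ind A A₀ ω]
      ring
    have e2 : ∫ ω, (P[Set.indicator ((A ∩ A₀) ∩ B) (fun _ => (1:ℝ)) |
          MeasurableSpace.comap X inferInstance]) ω ∂P
        = ∫ ω, (P⟦A ∩ A₀ | MeasurableSpace.comap X inferInstance⟧) ω *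
            (P⟦B | MeasurableSpace.comap X inferInstance⟧) ω ∂P := by
      refine integral_congr_ae ?_
      filter_upwards [hp] with ω hω
      simp only [Pi.mul_apply] at hω
      exact hω
    have e3 : ∫ ω, (P⟦A ∩ A₀ | MeasurableSpace.comap X inferInstance⟧) ω *
          (P⟦B | MeasurableSpace.comap X inferInstance⟧) ω ∂P
        = ∫ ω, (P⟦B | MeasurableSpace.comap X inferInstance⟧) ω *
            Set.indicator (A ∩ A₀) (fun _ => (1 : ℝ)) ω ∂P := by
      rw [integral_mul_condexp hmX hk_sm (by
        filter_upwards [hk_bdd] with ω hω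
        simpa [Real.norm_eq_abs] using hω) (ind_integrable' hAA₀Ω)]
      exact integral_congr_ae (Filter.Eventually.of_forall fun ω => mul_comm _ _)
    have e4 : ∫ ω, (P⟦B | MeasurableSpace.comap X inferInstance⟧) ω *
          Set.indicator (A ∩ A₀) (fun _ => (1 : ℝ)) ω ∂P
        = ∫ ω, Set.indicator A (fun _ => (1 : ℝ)) ω *
            (P⟦B | MeasurableSpace.comap X inferInstance⟧) ω *
            Set.indicator A₀ (fun _ => (1 : ℝ)) ω ∂P := by
      refine integral_congr_ae (Filter.Eventually.of_forall fun ω => ?_)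
      beta_reduce
      rw [← ind_mul_ind A A₀ ω]
      ring
    exact e1.trans (e2.trans (e3.trans e4))
  rw [step1, step3, step2]
  exact integral_congr_ae (Filter.Eventually.of_forall fun ω => by ring)

end AC
end CI
noncomputable section CI2
namespace AC
variable {Ω : Type*} {mB mV : MeasurableSpace Ω} [mΩ : MeasurableSpace Ω]
  {P : Measure Ω} [IsProbabilityMeasure P]
  {β γ : Type*} [MeasurableSpace β] [MeasurableSpace γ] {X : Ω → β} {Z : Ω → γ}

lemma num_CI (hX : Measurable X) (hZ : Measurable Z)
    (hmB : mB ≤ mΩ) (hBV : mB ≤ mV) (hV : mV ≤ mΩ)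
    (hprod : ∀ A B : Set Ω, MeasurableSet[mV] A →
      MeasurableSet[MeasurableSpace.comap Z inferInstance] B →
      (P⟦A ∩ B | MeasurableSpace.comap X inferInstance⟧)
        =ᵐ[P] (P⟦A | MeasurableSpace.comap X inferInstance⟧)
          * (P⟦B | MeasurableSpace.comap X inferInstance⟧))
    {Yr : Ω → ℝ} (hYr : Measurable Yr)
    (hYrV : MeasurableSpace.comap Yr inferInstance ≤ mV) (y : ℝ) :
    Num (MeasurableSpace.comap Z inferInstance ⊔ mB) P Yr y
      ≤ Num (MeasurableSpace.comap X inferInstance ⊔ mB) P Yr y := by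
  have hmXB : MeasurableSpace.comap X inferInstance ⊔ mB ≤ mΩ := sup_le hX.comap_le hmB
  have hmZB : MeasurableSpace.comap Z inferInstance ⊔ mB ≤ mΩ := sup_le hZ.comap_le hmB
  have hA₀V : MeasurableSet[mV] {ω | y ≤ Yr ω} :=
    hYrV _ ⟨Set.Ici y, measurableSet_Ici, rfl⟩
  have h2 := condexp_tower_CI (P := P) hX hZ hmB hBV hV hprod hA₀V
  have hg_meas : AEStronglyMeasurable
      (P[indf Yr y | MeasurableSpace.comap X inferInstance ⊔ mB]) P :=
    (stronglyMeasurable_condExp.mono hmXB).aestronglyMeasurable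
  have hg_bdd : ∀ᵐ ω ∂P,
      |(P[indf Yr y | MeasurableSpace.comap X inferInstance ⊔ mB]) ω| ≤ 1 :=
    condexp_abs_le_one (abs_indf_le_one Yr y)
  calc Num (MeasurableSpace.comap Z inferInstance ⊔ mB) P Yr y
      = variance (P[P[indf Yr y | MeasurableSpace.comap X inferInstance ⊔ mB]
          | MeasurableSpace.comap Z inferInstance ⊔ mB]) P :=
        variance_congr_ae h2.symm
    _ ≤ variance (P[indf Yr y | MeasurableSpace.comap X inferInstance ⊔ mB]) P :=
        variance_condexp_le hmZB hg_meas hg_bdd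
    _ = Num (MeasurableSpace.comap X inferInstance ⊔ mB) P Yr y := rfl

end AC
end CI2


open AC

theorem T_data_processing_inequality
    {Ω : Type*} [MeasurableSpace Ω] [StandardBorelSpace Ω] [Nonempty Ω]
    (P : Measure Ω) [IsProbabilityMeasure P]
    {p q r : ℕ} (X : Ω → (Fin p → ℝ)) (Z : Ω → (Fin r → ℝ)) (Y : Fin q → Ω → ℝ)
    (hX : Measurable X) (hZ : Measurable Z) (hY : ∀ i, Measurable (Y i))
    (hnd : ∀ i, Nondegenerate P (Y i))
    (hCI : CondIndepFun (MeasurableSpace.comap X inferInstance) hX.comap_le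
      (fun ω => fun i => Y i ω) Z P) :
    T P Y Z ≤ T P Y X ∧
      ∀ (r' : ℕ) (h : (Fin p → ℝ) → (Fin r' → ℝ)), Measurable h →
        T P Y (fun ω => h (X ω)) ≤ T P Y X := by
  have hYvec : Measurable (fun ω => fun i => Y i ω) :=
    measurable_pi_lambda _ hY
  have hc : ∀ i, xiSigma (sigmaPast Y i) P (Y i) ≤ 1 :=
    fun i => xiSigma_le_one (sigmaPast_le hY i) (hY i)
  constructor
  · have hprod := (condIndepFun_iff _ hX.comap_le _ _ hYvec hZ P).mp hCI
    have hab : ∀ i, xiSigma (MeasurableSpace.comap Z inferInstance ⊔ sigmaPast Y i) P (Y i)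
        ≤ xiSigma (MeasurableSpace.comap X inferInstance ⊔ sigmaPast Y i) P (Y i) := by
      intro i
      refine xiSigma_mono_of_num (sup_le hZ.comap_le (sigmaPast_le hY i))
        (sup_le hX.comap_le (sigmaPast_le hY i)) (hY i) ?_
      intro y
      exact num_CI hX hZ (sigmaPast_le hY i) (sigmaPast_le_vec i) hYvec.comap_le
        (fun A B hA hB => hprod A B hA hB) (hY i) (comap_le_comap_vec i) y
    exact T_alg hab hc
  · intro r' h hh
    have hcc : MeasurableSpace.comap (fun ω => h (X ω)) inferInstance
        ≤ MeasurableSpace.comap X inferInstance := by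
      rw [show (fun ω => h (X ω)) = h ∘ X from rfl, ← MeasurableSpace.comap_comp]
      exact MeasurableSpace.comap_mono hh.comap_le
    have hab : ∀ i, xiSigma (MeasurableSpace.comap (fun ω => h (X ω)) inferInstance
          ⊔ sigmaPast Y i) P (Y i)
        ≤ xiSigma (MeasurableSpace.comap X inferInstance ⊔ sigmaPast Y i) P (Y i) :=
      fun i => xiSigma_mono (sup_le_sup_right hcc _)
        (sup_le hX.comap_le (sigmaPast_le hY i)) (hY i)
    exact T_alg hab hc
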